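/- Let $n \geq 3$. Consider the graph $G$ on vertices $\{v_1, \dots, v_{2n+1}\}$ where $\{v_1,\dots,v_n\}$ and $\{v_{n+1},\dots,v_{2n}\}$ each form cliques, and $v_{2n+1}$ is adjacent to all other vertices. Let $\theta(v_i) = n+2$ for $i \leq 2n$ and $\theta(v_{2n+1}) = 2n+1$. Let $f(S)$ denote the number of nodes eventually activated by seedset $S$ in the technology diffusion process. Then for $S_1 = \{v_1,\dots,v_n\}$ and $S_2 = \{v_{2n+1}\}$: $f(S_1) = n$, $f(S_2) = 1$, and $f(S_1 \cup S_2) = 2n+1$; hence $f(S_1) + f(S_2) < f(S_1 \cup S_2)$ and $f$ is not submodular. -/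
import Mathlib



/-- The number of vertices of the connected component containing `v` in the
subgraph of `G` induced by `insert v A`. -/
noncomputable def compCard {V : Type*} (G : SimpleGraph V) (A : Set V) (v : V) : ℕ :=
  Nat.card {u : (insert v A : Set V) //
    (G.induce (insert v A)).Reachable ⟨v, Set.mem_insert v A⟩ u}

/-- A set of nodes `A` is closed under the activation rule. -/
def Closed {V : Type*} (G : SimpleGraph V) (θ : V → ℕ) (A : Set V) : Prop :=
  ∀ v, θ v ≤ compCard G A v → v ∈ A

/-- The set of nodes eventually activated by the seedset `S`. -/
def activeSet {V : Type*} (G : SimpleGraph V) (θ : V → ℕ) (S : Set V) : Set V :=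
  ⋂₀ {A : Set V | S ⊆ A ∧ Closed G θ A}

/-- Two `n`-cliques `{v_1,…,v_n}` and `{v_{n+1},…,v_{2n}}`, with the hub
`v_{2n+1}` adjacent to all other vertices (vertex `v_{i+1}` is index `i`). -/
def G11 (n : ℕ) : SimpleGraph (Fin (2 * n + 1)) :=
  SimpleGraph.fromRel (fun i j =>
    ((i : ℕ) < n ∧ (j : ℕ) < n) ∨
    (n ≤ (i : ℕ) ∧ (i : ℕ) < 2 * n ∧ n ≤ (j : ℕ) ∧ (j : ℕ) < 2 * n) ∨
    (i : ℕ) = 2 * n)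

def theta11 (n : ℕ) (i : Fin (2 * n + 1)) : ℕ :=
  if (i : ℕ) = 2 * n then 2 * n + 1 else n + 2

/-- The influence function: the number of nodes eventually activated. -/
noncomputable def f11 (n : ℕ) (S : Set (Fin (2 * n + 1))) : ℕ :=
  (activeSet (G11 n) (theta11 n) S).ncard

section Aux

lemma activeSet_eq_of_closed {V : Type*} (G : SimpleGraph V) (θ : V → ℕ) (S : Set V)
    (h : Closed G θ S) : activeSet G θ S = S :=
  subset_antisymm (Set.sInter_subset_of_mem ⟨subset_rfl, h⟩)
    (fun _ hv _ hA => hA.1 hv)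

lemma compCard_le {V : Type*} [Finite V] (G : SimpleGraph V) (A : Set V) (v : V) :
    compCard G A v ≤ Nat.card (insert v A : Set V) :=
  Nat.card_le_card_of_injective Subtype.val Subtype.val_injective

lemma ncard_S1 (n : ℕ) : ({i : Fin (2 * n + 1) | (i : ℕ) < n}).ncard = n := by
  have h : {i : Fin (2 * n + 1) | (i : ℕ) < n} =
      Set.range (fun i : Fin n => (⟨(i : ℕ), by omega⟩ : Fin (2 * n + 1))) := by
    ext j
    constructor
    · intro hj
      exact ⟨⟨(j : ℕ), hj⟩, Fin.ext rfl⟩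
    · rintro ⟨i, rfl⟩
      exact i.isLt
  rw [← Nat.card_coe_set_eq, h,
    Nat.card_range_of_injective (f := fun i : Fin n => (⟨(i : ℕ), by omega⟩ : Fin (2 * n + 1)))
      (fun a b hab => Fin.ext (by simpa using congrArg Fin.val hab)), Nat.card_eq_fintype_card, Fintype.card_fin]

lemma hub_set_eq (n : ℕ) :
    {i : Fin (2 * n + 1) | (i : ℕ) = 2 * n} = {(⟨2 * n, by omega⟩ : Fin (2 * n + 1))} := by
  ext j
  constructor
  · intro hj; exact Fin.ext hj
  · rintro rfl; rfl

lemma hub_adj (n : ℕ) (w : Fin (2 * n + 1)) (hw : w ≠ ⟨2 * n, by omega⟩) :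
    (G11 n).Adj ⟨2 * n, by omega⟩ w := by
  rw [G11, SimpleGraph.fromRel_adj]
  exact ⟨fun h => hw h.symm, Or.inl (Or.inr (Or.inr rfl))⟩

end Aux

/-- The influence function is not submodular: for `S₁` the first clique and
`S₂` the hub, `f(S₁) + f(S₂) < f(S₁ ∪ S₂)`. -/
theorem not_submodular (n : ℕ) (hn : 3 ≤ n) :
    f11 n {i | (i : ℕ) < n} = n ∧
    f11 n {i | (i : ℕ) = 2 * n} = 1 ∧
    f11 n ({i | (i : ℕ) < n} ∪ {i | (i : ℕ) = 2 * n}) = 2 * n + 1 ∧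
    f11 n {i | (i : ℕ) < n} + f11 n {i | (i : ℕ) = 2 * n}
      < f11 n ({i | (i : ℕ) < n} ∪ {i | (i : ℕ) = 2 * n}) := by
  set hub : Fin (2 * n + 1) := ⟨2 * n, by omega⟩ with hhub
  have hubval : (hub : ℕ) = 2 * n := rfl
  set S1 : Set (Fin (2 * n + 1)) := {i | (i : ℕ) < n} with hS1
  -- f(S1) = n
  have h1 : f11 n S1 = n := by
    have hcl : Closed (G11 n) (theta11 n) S1 := by
      intro v hv
      by_contra hvS
      have hvn : ¬ (v : ℕ) < n := hvS
      have hins : Nat.card (insert v S1 : Set (Fin (2 * n + 1))) = n + 1 := by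
        rw [Nat.card_coe_set_eq, Set.ncard_insert_of_notMem hvS (Set.toFinite _), ncard_S1]
      have hle : compCard (G11 n) S1 v ≤ n + 1 := hins ▸ compCard_le (G11 n) S1 v
      have hθ : n + 2 ≤ theta11 n v := by
        unfold theta11; split_ifs <;> omega
      omega
    rw [f11, activeSet_eq_of_closed _ _ _ hcl, hS1, ncard_S1]
  -- f(S2) = 1
  have h2 : f11 n {i | (i : ℕ) = 2 * n} = 1 := by
    have hcl : Closed (G11 n) (theta11 n) {i | (i : ℕ) = 2 * n} := by
      intro v hv
      by_contra hvS
      have hins : Nat.card (insert v {i | (i : ℕ) = 2 * n} : Set (Fin (2 * n + 1))) ≤ 2 := by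
        rw [Nat.card_coe_set_eq, hub_set_eq]
        exact le_trans (Set.ncard_insert_le _ _) (by rw [Set.ncard_singleton])
      have hle : compCard (G11 n) {i | (i : ℕ) = 2 * n} v ≤ 2 :=
        le_trans (compCard_le _ _ _) hins
      have hθ : n + 2 ≤ theta11 n v := by
        unfold theta11; split_ifs <;> omega
      omega
    rw [f11, activeSet_eq_of_closed _ _ _ hcl, hub_set_eq, Set.ncard_singleton]
  -- f(S1 ∪ S2) = 2n+1
  have h3 : f11 n (S1 ∪ {i | (i : ℕ) = 2 * n}) = 2 * n + 1 := by
    have huniv : activeSet (G11 n) (theta11 n) (S1 ∪ {i | (i : ℕ) = 2 * n}) = Set.univ := by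
      apply subset_antisymm (Set.subset_univ _)
      intro x _
      intro A hA
      obtain ⟨hSA, hcl⟩ := hA
      have hhubA : hub ∈ A := hSA (Or.inr hubval)
      have hS1A : S1 ⊆ A := fun y hy => hSA (Or.inl hy)
      -- second-clique vertices activate
      have hmid : ∀ v : Fin (2 * n + 1), n ≤ (v : ℕ) → (v : ℕ) < 2 * n → v ∈ A := by
        intro v hv1 hv2
        apply hcl
        have hθ : theta11 n v = n + 2 := by unfold theta11; split_ifs <;> omega
        rw [hθ]
        -- the component of v contains insert v (insert hub S1)
        have hvne : v ≠ hub := fun h => by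
          have := congrArg Fin.val h; simp [hubval] at this; omega
        have hsub : (insert v (insert hub S1) : Set (Fin (2 * n + 1))) ⊆ insert v A := by
          intro y hy
          rcases hy with rfl | rfl | hy
          · exact Set.mem_insert _ _
          · exact Set.mem_insert_of_mem _ hhubA
          · exact Set.mem_insert_of_mem _ (hS1A hy)
        have hhubmem : hub ∈ (insert v A : Set (Fin (2 * n + 1))) :=
          Set.mem_insert_of_mem _ hhubA
        have hreachhub : (SimpleGraph.induce (insert v A) (G11 n)).Reachable
            ⟨v, Set.mem_insert v A⟩ ⟨hub, hhubmem⟩ := by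
          apply SimpleGraph.Adj.reachable
          show (G11 n).Adj v hub
          exact ((hub_adj n v hvne).symm)
        have hreach : ∀ y (hy : y ∈ (insert v (insert hub S1) : Set (Fin (2 * n + 1)))),
            (SimpleGraph.induce (insert v A) (G11 n)).Reachable
              ⟨v, Set.mem_insert v A⟩ ⟨y, hsub hy⟩ := by
          intro y hy
          rcases hy with rfl | rfl | hy
          · exact SimpleGraph.Reachable.refl _
          · exact hreachhub
          · refine hreachhub.trans (SimpleGraph.Adj.reachable ?_)
            show (G11 n).Adj hub y
            apply hub_adj
            intro h
            have := congrArg Fin.val h; simp [hubval] at this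
            have : (y : ℕ) < n := hy
            omega
        -- inject insert v (insert hub S1) into the component
        have hinj : Function.Injective
            (fun u : (insert v (insert hub S1) : Set (Fin (2 * n + 1))) =>
              (⟨⟨u.1, hsub u.2⟩, hreach u.1 u.2⟩ :
                {u : (insert v A : Set (Fin (2 * n + 1))) //
                  (SimpleGraph.induce (insert v A) (G11 n)).Reachable
                    ⟨v, Set.mem_insert v A⟩ u})) := by
          intro a b hab
          apply Subtype.ext
          exact congrArg (fun z => z.1.1) hab
        have hcard : Nat.card (insert v (insert hub S1) : Set (Fin (2 * n + 1))) = n + 2 := by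
          rw [Nat.card_coe_set_eq]
          have hv' : v ∉ (insert hub S1 : Set (Fin (2 * n + 1))) := by
            rintro (rfl | hv')
            · exact hvne rfl
            · exact absurd hv' (by simp [hS1]; omega)
          have hhub' : hub ∉ S1 := by simp [hS1, hubval]; omega
          rw [Set.ncard_insert_of_notMem hv' (Set.toFinite _),
            Set.ncard_insert_of_notMem hhub' (Set.toFinite _), ncard_S1]
        calc n + 2 = Nat.card (insert v (insert hub S1) : Set (Fin (2 * n + 1))) := hcard.symm
          _ ≤ compCard (G11 n) A v := Nat.card_le_card_of_injective _ hinj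
      rcases lt_trichotomy ((x : ℕ)) n with hx | hx | hx
      · exact hS1A hx
      · exact hmid x (le_of_eq hx.symm) (by omega)
      · rcases Nat.lt_or_ge ((x : ℕ)) (2 * n) with hx2 | hx2
        · exact hmid x (le_of_lt hx) hx2
        · have : (x : ℕ) = 2 * n := by have := x.isLt; omega
          have : x = hub := Fin.ext this
          rw [this]; exact hhubA
    rw [f11, huniv, Set.ncard_univ, Nat.card_eq_fintype_card, Fintype.card_fin]
  refine ⟨h1, h2, h3, ?_⟩
  rw [h1, h2, h3]
  omega
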